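/- arXiv:1407.7888 — 2 statements merged into one kernel-verified Lean document; each statement's English description precedes it below -/
import Mathlib

section
/- For every κ₀ > 0 and δ ∈ (0,1), there is a constant C₀ > 0 such that for all λ > 0 and all u ∈ (0, δ), the integral ∫₀^δ ds/(λ + κ₀·s + κ₀·|s − u|) is at most C₀·log(1 + C₀/(λ + u/C₀)). -/
theorem stmt_7 (κ₀ δ : ℝ) (hκ : 0 < κ₀) (hδ : 0 < δ) (hδ1 : δ < 1) :
    ∃ C₀ : ℝ, 0 < C₀ ∧ ∀ lam u : ℝ, 0 < lam → 0 < u → u < δ →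
      (∫ s in (0:ℝ)..δ, 1 / (lam + κ₀ * s + κ₀ * |s - u|))
        ≤ C₀ * Real.log (1 + C₀ / (lam + u / C₀)) := by
  set C₀ : ℝ := 2 / κ₀ + κ₀ + 1 with hC
  have hC1 : (1:ℝ) ≤ C₀ := by
    rw [hC]
    have h1 : 0 < 2 / κ₀ := by positivity
    linarith
  have hCpos : 0 < C₀ := lt_of_lt_of_le one_pos hC1
  refine ⟨C₀, hCpos, ?_⟩
  intro lam u hlam hu huδ
  set a : ℝ := lam + κ₀ * u / 2 with ha
  set b : ℝ := κ₀ / 2 with hb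
  have hapos : 0 < a := by positivity
  have hbpos : 0 < b := by positivity
  -- pointwise bound
  have hpt : ∀ s ∈ Set.uIcc (0:ℝ) δ,
      1 / (lam + κ₀ * s + κ₀ * |s - u|) ≤ 1 / (a + b * s) := by
    intro s hs
    rw [Set.uIcc_of_le hδ.le] at hs
    have hs0 : 0 ≤ s := hs.1
    have habs1 : u - s ≤ |s - u| := by
      rw [abs_sub_comm]; exact le_abs_self _
    have habs0 : (0:ℝ) ≤ |s - u| := abs_nonneg _
    have hle : a + b * s ≤ lam + κ₀ * s + κ₀ * |s - u| := by
      rw [ha, hb]; nlinarith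
    exact one_div_le_one_div_of_le (by positivity) hle
  -- positivity of the denominator on the interval
  have hfden : ∀ s ∈ Set.uIcc (0:ℝ) δ, 0 < lam + κ₀ * s + κ₀ * |s - u| := by
    intro s hs
    rw [Set.uIcc_of_le hδ.le] at hs
    have := abs_nonneg (s - u)
    nlinarith [hs.1]
  -- integrability
  have hfint : IntervalIntegrable (fun s => 1 / (lam + κ₀ * s + κ₀ * |s - u|))
      MeasureTheory.volume 0 δ := by
    apply ContinuousOn.intervalIntegrable
    apply ContinuousOn.div continuousOn_const
    · exact (continuousOn_const.add (continuousOn_const.mul continuousOn_id)).add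
        (continuousOn_const.mul ((continuousOn_id.sub continuousOn_const).abs))
    · intro s hs; exact (hfden s hs).ne'
  have hgint : IntervalIntegrable (fun s => 1 / (a + b * s))
      MeasureTheory.volume 0 δ := by
    apply ContinuousOn.intervalIntegrable
    apply ContinuousOn.div continuousOn_const
    · exact continuousOn_const.add (continuousOn_const.mul continuousOn_id)
    · intro s hs
      rw [Set.uIcc_of_le hδ.le] at hs
      nlinarith [hs.1]
  have hmono := intervalIntegral.integral_mono_on hδ.le hfint hgint
    (fun s hs => hpt s (by rwa [Set.uIcc_of_le hδ.le]))
  -- compute the comparison integral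
  have h0 : (0:ℝ) ∉ Set.uIcc a (b * δ + a) := by
    intro h
    rw [Set.uIcc_of_le (by nlinarith)] at h
    exact absurd h.1 (by linarith)
  have hcomp : (∫ s in (0:ℝ)..δ, 1 / (a + b * s))
      = b⁻¹ * Real.log ((a + b * δ) / a) := by
    have h1 : ∀ s : ℝ, 1 / (a + b * s) = (fun x => 1 / x) (b * s + a) := by
      intro s; simp [add_comm]
    simp_rw [h1]
    rw [intervalIntegral.integral_comp_mul_add (fun x => 1 / x) hbpos.ne' a,
      mul_zero, zero_add, integral_one_div h0, smul_eq_mul, add_comm (b * δ) a]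
  -- final estimate
  have hratio : (a + b * δ) / a = 1 + b * δ / a := by
    field_simp
  have harg : b * δ / a ≤ C₀ / (lam + u / C₀) := by
    rw [div_le_div_iff₀ hapos (by positivity)]
    have h1 : b * δ ≤ C₀ := by
      rw [hb, hC]
      have : 0 < 2 / κ₀ := by positivity
      nlinarith
    have h2 : b * δ * (u / C₀) ≤ C₀ * (κ₀ * u / 2) := by
      have huC : u / C₀ ≤ u := div_le_self hu.le hC1
      have huC0 : 0 ≤ u / C₀ := by positivity
      have hstep : b * δ * (u / C₀) ≤ b * u := by
        calc b * δ * (u / C₀) = b * (δ * (u / C₀)) := by ring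
          _ ≤ b * (1 * u) := by
              refine mul_le_mul_of_nonneg_left ?_ hbpos.le
              exact mul_le_mul hδ1.le huC huC0 one_pos.le
          _ = b * u := by ring
      have hend : b * u ≤ C₀ * (κ₀ * u / 2) := by
        have hk : (0:ℝ) ≤ κ₀ * u / 2 := by positivity
        have := mul_le_mul_of_nonneg_right hC1 hk
        rw [hb]; linarith
      linarith
    rw [ha]
    calc b * δ * (lam + u / C₀) = b * δ * lam + b * δ * (u / C₀) := by ring
      _ ≤ C₀ * lam + C₀ * (κ₀ * u / 2) :=
          add_le_add (mul_le_mul_of_nonneg_right h1 hlam.le) h2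
      _ = C₀ * (lam + κ₀ * u / 2) := by ring
  have hlog : Real.log ((a + b * δ) / a) ≤ Real.log (1 + C₀ / (lam + u / C₀)) := by
    apply Real.log_le_log (by rw [hratio]; positivity)
    rw [hratio]; linarith
  have hlognn : 0 ≤ Real.log ((a + b * δ) / a) := by
    apply Real.log_nonneg
    rw [hratio]
    have : 0 ≤ b * δ / a := by positivity
    linarith
  have hbinv : b⁻¹ ≤ C₀ := by
    rw [hb, hC]
    rw [inv_eq_one_div]
    rw [div_le_iff₀ (by positivity)]
    have h2κ : 2 / κ₀ * κ₀ = 2 := by field_simp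
    nlinarith [sq_nonneg κ₀]
  calc (∫ s in (0:ℝ)..δ, 1 / (lam + κ₀ * s + κ₀ * |s - u|))
      ≤ b⁻¹ * Real.log ((a + b * δ) / a) := by rw [← hcomp]; exact hmono
    _ ≤ C₀ * Real.log (1 + C₀ / (lam + u / C₀)) := by
        apply mul_le_mul hbinv hlog hlognn hCpos.le
end

section
/- Fix α ∈ (1,2) and a continuous function θ: [0,1] → [0,∞) with θ(k) ~ a·k^α as k → 0⁺ for some a > 0 and θ(k) > 0 for k ∈ (0,1]. Then as t → ∞, ∫₀^{1/2} [(1 − e^{−θ(k)·t})/θ(k)]² dk ~ t^{2 − 1/α}·∫₀^∞ [(1 − e^{−a·ℓ^α})/(a·ℓ^α)]² dℓ, where the limiting integral is finite. -/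
open MeasureTheory Filter Set

private lemma gb17 {x : ℝ} (hx : 0 < x) :
    ((1 - Real.exp (-x)) / x) ^ 2 ≤ min 1 ((1 / (x)) ^ 2) := by
  have h1 : Real.exp (-x) ≤ 1 := Real.exp_le_one_iff.2 (by linarith)
  have h2 : 1 - x ≤ Real.exp (-x) := by have := Real.add_one_le_exp (-x); linarith
  have hp := Real.exp_pos (-x)
  have hnum0 : 0 ≤ 1 - Real.exp (-x) := by linarith
  have hu0 : 0 ≤ (1 - Real.exp (-x)) / x := by positivity
  have hle1 : (1 - Real.exp (-x)) / x ≤ 1 := by rw [div_le_one hx]; linarith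
  have hle2 : (1 - Real.exp (-x)) / x ≤ 1 / x := by gcongr; linarith
  refine le_min ?_ ?_
  · calc ((1 - Real.exp (-x)) / x) ^ 2 ≤ 1 ^ 2 := by gcongr
      _ = 1 := one_pow 2
  · gcongr

private lemma intmin17 (α m : ℝ) (hα : 1 < α) (hm : 0 < m) :
    IntegrableOn (fun ℓ : ℝ => min 1 ((1 / (m * ℓ ^ α)) ^ 2)) (Set.Ioi 0) := by
  have hmeas : AEStronglyMeasurable (fun ℓ : ℝ => min 1 ((1 / (m * ℓ ^ α)) ^ 2)) volume := by
    have : Measurable (fun ℓ : ℝ => min 1 ((1 / (m * ℓ ^ α)) ^ 2)) := by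
      apply Measurable.min measurable_const
      apply Measurable.pow_const
      apply Measurable.div measurable_const
      exact ((Real.continuous_rpow_const (by linarith : (0:ℝ) ≤ α)).measurable).const_mul m
    exact this.aestronglyMeasurable
  have h1 : IntegrableOn (fun ℓ : ℝ => min 1 ((1 / (m * ℓ ^ α)) ^ 2)) (Set.Ioc 0 1) := by
    refine Integrable.mono' (g := fun _ : ℝ => (1:ℝ))
      (integrableOn_const measure_Ioc_lt_top.ne) hmeas.restrict ?_
    refine ae_of_all _ fun ℓ => ?_
    have : (0:ℝ) ≤ min 1 ((1 / (m * ℓ ^ α)) ^ 2) := le_min zero_le_one (sq_nonneg _)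
    rw [Real.norm_eq_abs, abs_of_nonneg this]
    exact min_le_left _ _
  have h2 : IntegrableOn (fun ℓ : ℝ => min 1 ((1 / (m * ℓ ^ α)) ^ 2)) (Set.Ioi 1) := by
    have hint : IntegrableOn (fun ℓ : ℝ => (1/m)^2 * ℓ ^ (-(2*α))) (Set.Ioi 1) :=
      (integrableOn_Ioi_rpow_of_lt (by linarith) one_pos).const_mul _
    refine Integrable.mono' hint hmeas.restrict ?_
    refine (ae_restrict_iff' measurableSet_Ioi).2 (ae_of_all _ fun ℓ hℓ => ?_)
    have hℓ1 : (1:ℝ) < ℓ := hℓ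
    have hℓ0 : (0:ℝ) < ℓ := by linarith
    have hra : (0:ℝ) < ℓ ^ α := Real.rpow_pos_of_pos hℓ0 _
    have hmin0 : (0:ℝ) ≤ min 1 ((1 / (m * ℓ ^ α)) ^ 2) := le_min zero_le_one (sq_nonneg _)
    rw [Real.norm_eq_abs, abs_of_nonneg hmin0]
    have key : (1 / (m * ℓ ^ α)) ^ 2 = (1/m)^2 * ℓ ^ (-(2*α)) := by
      rw [Real.rpow_neg hℓ0.le, show (2:ℝ)*α = α*2 by ring, Real.rpow_mul hℓ0.le,
        Real.rpow_two]
      field_simp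
    rw [← key]
    exact min_le_right _ _
  have : Set.Ioc (0:ℝ) 1 ∪ Set.Ioi 1 = Set.Ioi 0 := Set.Ioc_union_Ioi_eq_Ioi zero_le_one
  rw [← this]
  exact h1.union h2

private lemma gcont17 {x : ℝ} (hx : x ≠ 0) :
    ContinuousAt (fun x : ℝ => ((1 - Real.exp (-x)) / x) ^ 2) x := by
  exact (((continuous_const.sub (Real.continuous_exp.comp continuous_neg)).continuousAt).div
    continuousAt_id hx).pow 2

theorem stmt_17 (α a : ℝ) (hα : 1 < α) (hα2 : α < 2) (ha : 0 < a)
    (θ : ℝ → ℝ) (hcont : ContinuousOn θ (Set.Icc 0 1))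
    (hpos : ∀ k : ℝ, k ∈ Set.Ioc (0:ℝ) 1 → 0 < θ k)
    (hasymp : Filter.Tendsto (fun k : ℝ => θ k / k ^ α)
      (nhdsWithin 0 (Set.Ioi 0)) (nhds a)) :
    IntegrableOn (fun ℓ : ℝ => ((1 - Real.exp (-(a * ℓ ^ α))) / (a * ℓ ^ α)) ^ 2)
      (Set.Ioi 0) ∧
    Filter.Tendsto (fun t : ℝ =>
        (∫ k in (0:ℝ)..(1/2), ((1 - Real.exp (-(θ k * t))) / θ k) ^ 2) /
        (t ^ (2 - 1 / α) *
          ∫ ℓ in Set.Ioi (0:ℝ), ((1 - Real.exp (-(a * ℓ ^ α))) / (a * ℓ ^ α)) ^ 2))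
      Filter.atTop (nhds 1) := by
  have hα0 : (0:ℝ) < α := by linarith
  set g : ℝ → ℝ := fun x => ((1 - Real.exp (-x)) / x) ^ 2 with hgdef
  -- Part 1: integrability
  have part1 : IntegrableOn (fun ℓ : ℝ => g (a * ℓ ^ α)) (Set.Ioi 0) := by
    refine Integrable.mono' (intmin17 α a hα ha) ?_ ?_
    · refine (ContinuousOn.aemeasurable ?_ measurableSet_Ioi).aestronglyMeasurable
      intro ℓ hℓ
      have hℓ0 : (0:ℝ) < ℓ := hℓ
      have : a * ℓ ^ α ≠ 0 := by positivity
      have hc : Continuous (fun ℓ : ℝ => a * ℓ ^ α) :=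
        continuous_const.mul (Real.continuous_rpow_const hα0.le)
      exact (ContinuousAt.comp (f := fun ℓ : ℝ => a * ℓ ^ α)
        (gcont17 this) hc.continuousAt).continuousWithinAt
    · refine (ae_restrict_iff' measurableSet_Ioi).2 (ae_of_all _ fun ℓ hℓ => ?_)
      have hℓ0 : (0:ℝ) < ℓ := hℓ
      have hx : (0:ℝ) < a * ℓ ^ α := by positivity
      rw [Real.norm_eq_abs, abs_of_nonneg (sq_nonneg _)]
      exact gb17 hx
  set J : ℝ := ∫ ℓ in Set.Ioi (0:ℝ), g (a * ℓ ^ α) with hJdef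
  have hJpos : 0 < J := by
    rw [hJdef, setIntegral_pos_iff_support_of_nonneg_ae
      (ae_of_all _ fun ℓ => sq_nonneg _) part1]
    have hsub : Set.Ioi (0:ℝ) ⊆ Function.support (fun ℓ : ℝ => g (a * ℓ ^ α)) := by
      intro ℓ hℓ
      have hℓ0 : (0:ℝ) < ℓ := hℓ
      have hx : (0:ℝ) < a * ℓ ^ α := by positivity
      have hlt : Real.exp (-(a * ℓ ^ α)) < 1 := Real.exp_lt_one_iff.2 (by linarith)
      have : 0 < g (a * ℓ ^ α) := by
        simp only [hgdef]
        exact pow_pos (div_pos (by linarith) hx) 2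
      exact ne_of_gt this
    rw [Set.inter_eq_self_of_subset_right hsub, Real.volume_Ioi]
    exact ENNReal.zero_lt_top
  -- lower bound m * k ^ α ≤ θ k on (0, 1/2]
  obtain ⟨m, hm, hmθ⟩ : ∃ m : ℝ, 0 < m ∧ ∀ k ∈ Set.Ioc (0:ℝ) (1/2), m * k ^ α ≤ θ k := by
    have hev : ∀ᶠ k in nhdsWithin 0 (Set.Ioi 0), a/2 < θ k / k ^ α :=
      hasymp.eventually (eventually_gt_nhds (by linarith))
    rw [eventually_nhdsWithin_iff, Metric.eventually_nhds_iff] at hev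
    obtain ⟨δ, hδ0, hδ⟩ := hev
    set δ' : ℝ := min δ (1/2) with hδ'def
    have hδ'0 : 0 < δ' := lt_min hδ0 (by norm_num)
    have hδ'half : δ' ≤ 1/2 := min_le_right _ _
    obtain ⟨k₀, hk₀mem, hk₀min⟩ :=
      isCompact_Icc.exists_isMinOn (Set.nonempty_Icc.2 hδ'half)
        (hcont.mono (Set.Icc_subset_Icc hδ'0.le (by norm_num)))
    have hc₀ : 0 < θ k₀ := hpos k₀ ⟨lt_of_lt_of_le hδ'0 hk₀mem.1, le_trans hk₀mem.2 (by norm_num)⟩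
    refine ⟨min (a/2) (θ k₀), lt_min (by linarith) hc₀, fun k hk => ?_⟩
    have hk0 : (0:ℝ) < k := hk.1
    have hkα : (0:ℝ) < k ^ α := Real.rpow_pos_of_pos hk0 _
    rcases lt_or_ge k δ' with h | h
    · have hd : dist k 0 < δ := by
        rw [Real.dist_eq, sub_zero, abs_of_pos hk0]
        exact lt_of_lt_of_le h (min_le_left _ _)
      have := hδ hd hk0
      calc min (a/2) (θ k₀) * k ^ α ≤ (a/2) * k ^ α := by gcongr; exact min_le_left _ _
        _ ≤ θ k := by rw [lt_div_iff₀ hkα] at this; linarith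
    · have hkmem : k ∈ Set.Icc δ' (1/2) := ⟨h, hk.2⟩
      have hθk : θ k₀ ≤ θ k := hk₀min hkmem
      have hkα1 : k ^ α ≤ 1 :=
        Real.rpow_le_one hk0.le (le_trans hk.2 (by norm_num)) hα0.le
      calc min (a/2) (θ k₀) * k ^ α ≤ θ k₀ * 1 := by
            apply mul_le_mul (min_le_right _ _) hkα1 hkα.le hc₀.le
        _ = θ k₀ := mul_one _
        _ ≤ θ k := hθk
  -- scaling identity
  have key : ∀ t : ℝ, 0 < t → ∀ ℓ : ℝ, 0 ≤ ℓ → (t ^ (-(1/α)) * ℓ) ^ α * t = ℓ ^ α := by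
    intro t ht ℓ hℓ
    have hc0 : (0:ℝ) ≤ t ^ (-(1/α)) := (Real.rpow_pos_of_pos ht _).le
    have hne : α ≠ 0 := ne_of_gt hα0
    rw [Real.mul_rpow hc0 hℓ,
      show ((t ^ (-(1/α))) ^ α : ℝ) = t ^ ((-(1/α)) * α) from (Real.rpow_mul ht.le _ _).symm,
      show (-(1/α)) * α = -1 by field_simp, Real.rpow_neg_one]
    field_simp
  have hcb : ∀ t : ℝ, 0 < t → t ^ (-(1/α)) * (t ^ (1/α) / 2) = 1/2 := by
    intro t ht
    rw [show t ^ (-(1/α)) * (t ^ (1/α) / 2) = t ^ (-(1/α)) * t ^ (1/α) / 2 by ring,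
      ← Real.rpow_add ht]
    norm_num
  have hmem : ∀ t : ℝ, 0 < t → ∀ ℓ ∈ Set.Ioc (0:ℝ) (t ^ (1/α) / 2),
      t ^ (-(1/α)) * ℓ ∈ Set.Ioc (0:ℝ) (1/2) := by
    intro t ht ℓ hℓ
    have hc : (0:ℝ) < t ^ (-(1/α)) := Real.rpow_pos_of_pos ht _
    constructor
    · exact mul_pos hc hℓ.1
    · calc t ^ (-(1/α)) * ℓ ≤ t ^ (-(1/α)) * (t ^ (1/α) / 2) := by gcongr; exact hℓ.2
        _ = 1/2 := hcb t ht
  have hlow : ∀ t : ℝ, 0 < t → ∀ ℓ ∈ Set.Ioc (0:ℝ) (t ^ (1/α) / 2),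
      m * ℓ ^ α ≤ θ (t ^ (-(1/α)) * ℓ) * t := by
    intro t ht ℓ hℓ
    have h1 := hmθ _ (hmem t ht ℓ hℓ)
    calc m * ℓ ^ α = m * ((t ^ (-(1/α)) * ℓ) ^ α * t) := by rw [key t ht ℓ hℓ.1.le]
      _ = m * (t ^ (-(1/α)) * ℓ) ^ α * t := by ring
      _ ≤ θ (t ^ (-(1/α)) * ℓ) * t := by gcongr
  -- dominated convergence
  have hB : Filter.Tendsto (fun t : ℝ => ∫ ℓ in Set.Ioi (0:ℝ),
      (Set.Ioc (0:ℝ) (t ^ (1/α) / 2)).indicator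
        (fun ℓ => g (θ (t ^ (-(1/α)) * ℓ) * t)) ℓ) Filter.atTop (nhds J) := by
    rw [hJdef]
    apply tendsto_integral_filter_of_dominated_convergence
      (fun ℓ : ℝ => min 1 ((1 / (m * ℓ ^ α)) ^ 2))
    · -- measurability
      filter_upwards [eventually_gt_atTop (0:ℝ)] with t ht
      rw [aestronglyMeasurable_indicator_iff measurableSet_Ioc,
        Measure.restrict_restrict measurableSet_Ioc,
        Set.inter_eq_self_of_subset_left Set.Ioc_subset_Ioi_self]
      refine (ContinuousOn.aemeasurable ?_ measurableSet_Ioc).aestronglyMeasurable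
      have h1 : ContinuousOn (fun ℓ : ℝ => θ (t ^ (-(1/α)) * ℓ) * t)
          (Set.Ioc 0 (t ^ (1/α) / 2)) := by
        refine ContinuousOn.mul ?_ continuousOn_const
        refine ContinuousOn.comp hcont (continuous_const.mul continuous_id).continuousOn ?_
        intro ℓ hℓ
        have := hmem t ht ℓ hℓ
        exact ⟨this.1.le, le_trans this.2 (by norm_num)⟩
      intro ℓ hℓ
      have hpos' : 0 < θ (t ^ (-(1/α)) * ℓ) * t := by
        have hk := hmem t ht ℓ hℓ
        exact mul_pos (hpos _ ⟨hk.1, le_trans hk.2 (by norm_num)⟩) ht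
      exact ContinuousAt.comp_continuousWithinAt (f := fun ℓ : ℝ => θ (t ^ (-(1/α)) * ℓ) * t)
        (gcont17 (ne_of_gt hpos')) (h1 ℓ hℓ)
    · -- bound
      filter_upwards [eventually_gt_atTop (0:ℝ)] with t ht
      refine (ae_restrict_iff' measurableSet_Ioi).2 (ae_of_all _ fun ℓ hℓ => ?_)
      have hℓ0 : (0:ℝ) < ℓ := hℓ
      by_cases hin : ℓ ∈ Set.Ioc (0:ℝ) (t ^ (1/α) / 2)
      · rw [Set.indicator_of_mem hin]
        have hx : 0 < m * ℓ ^ α := by positivity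
        have hge := hlow t ht ℓ hin
        have hxpos : 0 < θ (t ^ (-(1/α)) * ℓ) * t := lt_of_lt_of_le hx hge
        rw [Real.norm_eq_abs, abs_of_nonneg (sq_nonneg _)]
        refine le_trans (gb17 hxpos) (min_le_min le_rfl ?_)
        have h9 : 1 / (θ (t ^ (-(1/α)) * ℓ) * t) ≤ 1 / (m * ℓ ^ α) :=
          one_div_le_one_div_of_le hx hge
        have h10 : 0 ≤ 1 / (θ (t ^ (-(1/α)) * ℓ) * t) := by positivity
        exact pow_le_pow_left₀ h10 h9 2
      · rw [Set.indicator_of_notMem hin]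
        simp only [norm_zero]
        exact le_min zero_le_one (sq_nonneg _)
    · -- bound integrable
      exact intmin17 α m hα hm
    · -- pointwise limit
      refine (ae_restrict_iff' measurableSet_Ioi).2 (ae_of_all _ fun ℓ hℓ => ?_)
      have hℓ0 : (0:ℝ) < ℓ := hℓ
      have hraα : (0:ℝ) < ℓ ^ α := Real.rpow_pos_of_pos hℓ0 _
      have harg : Filter.Tendsto (fun t : ℝ => θ (t ^ (-(1/α)) * ℓ) * t)
          Filter.atTop (nhds (a * ℓ ^ α)) := by
        have h1 : Filter.Tendsto (fun t : ℝ => t ^ (-(1/α)) * ℓ)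
            Filter.atTop (nhdsWithin 0 (Set.Ioi 0)) := by
          rw [tendsto_nhdsWithin_iff]
          constructor
          · have := (tendsto_rpow_neg_atTop (by positivity : (0:ℝ) < 1/α)).mul_const ℓ
            simpa using this
          · filter_upwards [eventually_gt_atTop (0:ℝ)] with t ht
            exact mul_pos (Real.rpow_pos_of_pos ht _) hℓ0
        have h2 := (hasymp.comp h1).mul_const (ℓ ^ α)
        refine h2.congr' ?_
        filter_upwards [eventually_gt_atTop (0:ℝ)] with t ht
        have hk := key t ht ℓ hℓ0.le
        have hkα : (0:ℝ) < (t ^ (-(1/α)) * ℓ) ^ α :=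
          Real.rpow_pos_of_pos (mul_pos (Real.rpow_pos_of_pos ht _) hℓ0) _
        simp only [Function.comp]
        rw [div_mul_eq_mul_div, ← hk]
        field_simp
      have hcg : ContinuousAt g (a * ℓ ^ α) := gcont17 (by positivity)
      have h3 := hcg.tendsto.comp harg
      refine h3.congr' ?_
      have hbt : Filter.Tendsto (fun t : ℝ => t ^ (1/α) / 2) Filter.atTop Filter.atTop :=
        (tendsto_rpow_atTop (by positivity : (0:ℝ) < 1/α)).atTop_div_const (by norm_num)
      filter_upwards [hbt.eventually_ge_atTop ℓ] with t hbℓ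
      rw [Set.indicator_of_mem
        (show ℓ ∈ Set.Ioc (0:ℝ) (t ^ (1/α) / 2) from ⟨hℓ0, hbℓ⟩)]
      rfl
  refine ⟨part1, ?_⟩
  have hfin := hB.div_const J
  rw [div_self (ne_of_gt hJpos)] at hfin
  refine hfin.congr' ?_
  filter_upwards [eventually_gt_atTop (0:ℝ)] with t ht
  have hcpos : (0:ℝ) < t ^ (-(1/α)) := Real.rpow_pos_of_pos ht _
  have hbnn : (0:ℝ) ≤ t ^ (1/α) / 2 := by positivity
  have hA : (∫ k in (0:ℝ)..(1/2), ((1 - Real.exp (-(θ k * t))) / θ k) ^ 2)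
      = t ^ ((2:ℝ) - 1/α) * ∫ ℓ in Set.Ioi (0:ℝ),
        (Set.Ioc (0:ℝ) (t ^ (1/α) / 2)).indicator
          (fun ℓ => g (θ (t ^ (-(1/α)) * ℓ) * t)) ℓ := by
    have hfun : (fun k => ((1 - Real.exp (-(θ k * t))) / θ k) ^ 2)
        = fun k => t^2 * g (θ k * t) := by
      funext k
      simp only [hgdef]
      by_cases hθ : θ k = 0
      · simp [hθ]
      · have htne : t ≠ 0 := ne_of_gt ht
        field_simp
    rw [hfun]
    have hsub := intervalIntegral.smul_integral_comp_mul_left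
      (f := fun k => t^2 * g (θ k * t)) (a := 0) (b := t ^ (1/α) / 2) (t ^ (-(1/α)))
    rw [mul_zero, hcb t ht] at hsub
    rw [← hsub, smul_eq_mul]
    rw [setIntegral_indicator measurableSet_Ioc,
      Set.inter_eq_self_of_subset_right Set.Ioc_subset_Ioi_self,
      intervalIntegral.integral_of_le hbnn]

    rw [MeasureTheory.integral_const_mul, ← mul_assoc,
      show (2:ℝ) - 1/α = -(1/α) + 2 by ring, Real.rpow_add ht, Real.rpow_two]
  rw [hA, mul_div_mul_left _ _ (ne_of_gt (Real.rpow_pos_of_pos ht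
    (2 - 1/α)))]
end
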